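/- arXiv:2412.11295 — 2 statements merged into one kernel-verified Lean document; each statement's English description precedes it below -/
import Mathlib

section
/- Let R be a cartesian relational doctrine satisfying Frobenius reciprocity. Then for every object X the equation (d_X ⊠ gr(Δ_X)) ; (gr(Δ_X)° ⊠ d_X) = gr(Δ_X)° ; gr(Δ_X) holds in R(X×X, X×X), where the composite on the left is taken modulo the canonical associativity isomorphism between X×(X×X) and (X×X)×X. -/
open CategoryTheory

universe w w' v v' u u'

/-- A relational doctrine on a category `C` with fibres `P X Y` (posets):
a contravariant functor `(C^op × C^op) → Pos` with identities, composition and converse. -/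
structure RelDoctrine (C : Type u) [Category.{v} C] (P : C → C → Type w)
    [∀ X Y : C, PartialOrder (P X Y)] where
  reidx : ∀ {A X B Y : C}, (A ⟶ X) → (B ⟶ Y) → P X Y → P A B
  reidx_mono : ∀ {A X B Y : C} (f : A ⟶ X) (g : B ⟶ Y), Monotone (reidx f g)
  reidx_id : ∀ {X Y : C} (α : P X Y), reidx (𝟙 X) (𝟙 Y) α = α
  reidx_comp :
    ∀ {A X X' B Y Y' : C} (f : A ⟶ X) (f' : X ⟶ X') (g : B ⟶ Y) (g' : Y ⟶ Y') (α : P X' Y'),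
      reidx (f ≫ f') (g ≫ g') α = reidx f g (reidx f' g' α)
  d : ∀ X : C, P X X
  comp : ∀ {X Y Z : C}, P X Y → P Y Z → P X Z
  comp_mono : ∀ {X Y Z : C} {α α' : P X Y} {β β' : P Y Z},
      α ≤ α' → β ≤ β' → comp α β ≤ comp α' β'
  conv : ∀ {X Y : C}, P X Y → P Y X
  conv_mono : ∀ {X Y : C} {α α' : P X Y}, α ≤ α' → conv α ≤ conv α'
  d_le_reidx : ∀ {X Y : C} (f : X ⟶ Y), d X ≤ reidx f f (d Y)
  comp_reidx_le : ∀ {X A Y B Z W : C} (f : X ⟶ A) (g : Y ⟶ B) (h : Z ⟶ W)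
      (α : P A B) (β : P B W),
      comp (reidx f g α) (reidx g h β) ≤ reidx f h (comp α β)
  conv_reidx_le : ∀ {X A Y B : C} (f : X ⟶ A) (g : Y ⟶ B) (α : P A B),
      conv (reidx f g α) ≤ reidx g f (conv α)
  comp_assoc : ∀ {X Y Z W : C} (α : P X Y) (β : P Y Z) (γ : P Z W),
      comp α (comp β γ) = comp (comp α β) γ
  d_comp : ∀ {X Y : C} (α : P X Y), comp (d X) α = α
  comp_d : ∀ {X Y : C} (α : P X Y), comp α (d Y) = α
  conv_comp : ∀ {X Y Z : C} (α : P X Y) (β : P Y Z),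
      conv (comp α β) = comp (conv β) (conv α)
  conv_d : ∀ X : C, conv (d X) = d X
  conv_conv : ∀ {X Y : C} (α : P X Y), conv (conv α) = α

namespace RelDoctrine

variable {C : Type u} [Category.{v} C] {P : C → C → Type w} [∀ X Y : C, PartialOrder (P X Y)]

/-- The graph of an arrow `f : X ⟶ Y` is `R(f, id_Y)(d_Y)`. -/
def gr (D : RelDoctrine C P) {X Y : C} (f : X ⟶ Y) : P X Y :=
  D.reidx f (𝟙 Y) (D.d Y)

/-- `α` is functional: `α° ; α ≤ d_Y`. -/
def Functional (D : RelDoctrine C P) {X Y : C} (α : P X Y) : Prop :=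
  D.comp (D.conv α) α ≤ D.d Y

/-- `α` is total: `d_X ≤ α ; α°`. -/
def Total (D : RelDoctrine C P) {X Y : C} (α : P X Y) : Prop :=
  D.d X ≤ D.comp α (D.conv α)

/-- `α` is injective: `α ; α° ≤ d_X`. -/
def InjectiveRel (D : RelDoctrine C P) {X Y : C} (α : P X Y) : Prop :=
  D.comp α (D.conv α) ≤ D.d X

/-- `α` is surjective: `d_Y ≤ α° ; α`. -/
def SurjectiveRel (D : RelDoctrine C P) {X Y : C} (α : P X Y) : Prop :=
  D.d Y ≤ D.comp (D.conv α) α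

/-- The kernel of an arrow `f` is `gr(f) ; gr(f)°`. -/
def kernelOf (D : RelDoctrine C P) {X Y : C} (f : X ⟶ Y) : P X X :=
  D.comp (D.gr f) (D.conv (D.gr f))

/-- An `R`-equivalence relation: reflexive, symmetric, transitive. -/
def IsEquivRel (D : RelDoctrine C P) {X : C} (ρ : P X X) : Prop :=
  D.d X ≤ ρ ∧ D.conv ρ ≤ ρ ∧ D.comp ρ ρ ≤ ρ

/-- `q : X ⟶ W` is a quotient arrow of the equivalence relation `ρ` on `X`. -/
def IsQuotientArrow (D : RelDoctrine C P) {X W : C} (ρ : P X X) (q : X ⟶ W) : Prop :=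
  ρ ≤ D.kernelOf q ∧
    ∀ (Z : C) (f : X ⟶ Z), ρ ≤ D.kernelOf f → ∃! h : W ⟶ Z, f = q ≫ h

/-- The quotient arrow `q` of `ρ` is effective: `ρ = gr(q) ; gr(q)°`. -/
def Effective (D : RelDoctrine C P) {X W : C} (ρ : P X X) (q : X ⟶ W) : Prop :=
  ρ = D.kernelOf q

/-- The arrow `q` is descent: `d_W ≤ gr(q)° ; gr(q)`. -/
def Descent (D : RelDoctrine C P) {X W : C} (q : X ⟶ W) : Prop :=
  D.d W ≤ D.comp (D.conv (D.gr q)) (D.gr q)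

/-- `D` has quotients: every equivalence relation admits an effective descent quotient arrow. -/
def HasQuotients (D : RelDoctrine C P) : Prop :=
  ∀ (X : C) (ρ : P X X), D.IsEquivRel ρ →
    ∃ (W : C) (q : X ⟶ W), D.IsQuotientArrow ρ q ∧ D.Effective ρ q ∧ D.Descent q

/-- `f ≐ g` : the arrows `f, g` are `R`-equal, i.e. `d_X ≤ R(f,g)(d_Y)`. -/
def RExtEq (D : RelDoctrine C P) {X Y : C} (f g : X ⟶ Y) : Prop :=
  D.d X ≤ D.reidx f g (D.d Y)

/-- `D` is extensional: `R`-equal arrows are equal. -/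
def Extensional (D : RelDoctrine C P) : Prop :=
  ∀ (X Y : C) (f g : X ⟶ Y), D.RExtEq f g → f = g

/-- `D` is balanced: every bijective arrow is an isomorphism. -/
def BalancedDoc (D : RelDoctrine C P) : Prop :=
  ∀ (X Y : C) (f : X ⟶ Y), D.InjectiveRel (D.gr f) → D.SurjectiveRel (D.gr f) → IsIso f

/-- `Q` is `R`-projective with respect to quotient arrows. -/
def ProjectiveObj (D : RelDoctrine C P) (Q : C) : Prop :=
  ∀ (X Y : C) (f : Q ⟶ Y) (q : X ⟶ Y) (ρ : P X X),
    D.IsEquivRel ρ → D.IsQuotientArrow ρ q → ∃ h : Q ⟶ X, f = h ≫ q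

/-- Descent data with respect to equivalence relations `ρ` and `σ` : `ρ° ; α ; σ ≤ α`. -/
def Des (D : RelDoctrine C P) {X Y : C} (ρ : P X X) (σ : P Y Y) (α : P X Y) : Prop :=
  D.comp (D.comp (D.conv ρ) α) σ ≤ α

/-- The rule of unique choice: every functional total relation contains the graph of an arrow. -/
def RUC (D : RelDoctrine C P) : Prop :=
  ∀ (X Y : C) (α : P X Y), D.Functional α → D.Total α → ∃ f : X ⟶ Y, D.gr f ≤ α

end RelDoctrine

variable {C : Type u} [Category.{v} C] {P : C → C → Type w} [∀ X Y : C, PartialOrder (P X Y)]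

open CategoryTheory.Limits

/-- A cartesian structure on a relational doctrine. -/
structure CartStruct (D : RelDoctrine C P) [HasTerminal C] [HasBinaryProducts C] where
  rprod : ∀ {X Y A B : C}, P X Y → P A B → P (X ⨯ A) (Y ⨯ B)
  rprod_mono : ∀ {X Y A B : C} {α α' : P X Y} {β β' : P A B},
      α ≤ α' → β ≤ β' → rprod α β ≤ rprod α' β'
  rprod_natural : ∀ {X' X Y' Y A' A B' B : C} (f : X' ⟶ X) (g : Y' ⟶ Y)
      (h : A' ⟶ A) (k : B' ⟶ B) (α : P X Y) (β : P A B),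
      rprod (D.reidx f g α) (D.reidx h k β) =
        D.reidx (prod.map f h) (prod.map g k) (rprod α β)
  d_rprod : ∀ X Y : C, D.d (X ⨯ Y) = rprod (D.d X) (D.d Y)
  rprod_comp : ∀ {X Y Z X' Y' Z' : C} (α : P X Y) (β : P Y Z) (α' : P X' Y') (β' : P Y' Z'),
      D.comp (rprod α α') (rprod β β') = rprod (D.comp α β) (D.comp α' β')
  rprod_conv : ∀ {X Y A B : C} (α : P X Y) (β : P A B),
      D.conv (rprod α β) = rprod (D.conv α) (D.conv β)
  le_term : ∀ {X Y : C} (α : P X Y),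
      α ≤ D.comp (D.gr (terminal.from X)) (D.conv (D.gr (terminal.from Y)))
  le_fst : ∀ {X Y A B : C} (α : P X Y) (β : P A B),
      rprod α β ≤ D.comp (D.comp (D.gr (prod.fst : X ⨯ A ⟶ X)) α)
        (D.conv (D.gr (prod.fst : Y ⨯ B ⟶ Y)))
  le_snd : ∀ {X Y A B : C} (α : P X Y) (β : P A B),
      rprod α β ≤ D.comp (D.comp (D.gr (prod.snd : X ⨯ A ⟶ A)) β)
        (D.conv (D.gr (prod.snd : Y ⨯ B ⟶ B)))
  le_diag : ∀ {X Y : C} (α : P X Y),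
      α ≤ D.comp (D.comp (D.gr (diag X)) (rprod α α)) (D.conv (D.gr (diag Y)))

namespace CartStruct

variable [HasTerminal C] [HasBinaryProducts C] {D : RelDoctrine C P}

/-- The fibred binary meet `α ∧ β = gr(Δ) ; (α ⊠ β) ; gr(Δ)°`. -/
noncomputable def meet (CS : CartStruct D) {X Y : C} (α β : P X Y) : P X Y :=
  D.comp (D.comp (D.gr (diag X)) (CS.rprod α β)) (D.conv (D.gr (diag Y)))

/-- Frobenius reciprocity. -/
def Frobenius (CS : CartStruct D) : Prop :=
  ∀ (X Y A : C) (f : X ⟶ Y) (α : P A X) (β : P A Y),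
    CS.meet (D.comp α (D.gr f)) β = D.comp (CS.meet α (D.comp β (D.conv (D.gr f)))) (D.gr f)

/-- The modular law. -/
def Modular (CS : CartStruct D) : Prop :=
  ∀ (A X Y : C) (α : P A X) (β : P A Y) (γ : P X Y),
    CS.meet (D.comp α γ) β ≤ D.comp (CS.meet α (D.comp β (D.conv γ))) γ

end CartStruct


section AuxLemmas

open CategoryTheory.Limits

namespace RelDoctrine

variable {C : Type u} [Category.{v} C] {P : C → C → Type w} [∀ X Y : C, PartialOrder (P X Y)]
variable (D : RelDoctrine C P)

lemma conv_reidx {A X B Y : C} (f : A ⟶ X) (g : B ⟶ Y) (α : P X Y) :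
    D.conv (D.reidx f g α) = D.reidx g f (D.conv α) := by
  refine le_antisymm (D.conv_reidx_le f g α) ?_
  have h := D.conv_reidx_le g f (D.conv α)
  rw [D.conv_conv] at h
  calc D.reidx g f (D.conv α) = D.conv (D.conv (D.reidx g f (D.conv α))) := (D.conv_conv _).symm
    _ ≤ D.conv (D.reidx f g α) := D.conv_mono h

lemma gr_id (X : C) : D.gr (𝟙 X) = D.d X := D.reidx_id _

lemma conv_gr {X Y : C} (f : X ⟶ Y) :
    D.conv (D.gr f) = D.reidx (𝟙 Y) f (D.d Y) := by
  rw [RelDoctrine.gr, conv_reidx, D.conv_d]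

lemma comp_gr_le {X Y B : C} (f : X ⟶ Y) (β : P Y B) :
    D.comp (D.gr f) β ≤ D.reidx f (𝟙 B) β := by
  have h := D.comp_reidx_le f (𝟙 Y) (𝟙 B) (D.d Y) β
  rw [D.reidx_id, D.d_comp] at h
  exact h

lemma convgr_comp_le {X Y B : C} (f : X ⟶ Y) (β : P Y B) :
    D.comp (D.conv (D.gr f)) (D.reidx f (𝟙 B) β) ≤ β := by
  have h := D.comp_reidx_le (𝟙 Y) f (𝟙 B) (D.d Y) β
  rw [D.reidx_id, D.d_comp, ← conv_gr] at h
  exact h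

lemma reidx_one_eq {X Y B : C} (f : X ⟶ Y) (hf : D.Total (D.gr f)) (β : P Y B) :
    D.reidx f (𝟙 B) β = D.comp (D.gr f) β := by
  refine le_antisymm ?_ (D.comp_gr_le f β)
  calc D.reidx f (𝟙 B) β = D.comp (D.d X) (D.reidx f (𝟙 B) β) := (D.d_comp _).symm
    _ ≤ D.comp (D.comp (D.gr f) (D.conv (D.gr f))) (D.reidx f (𝟙 B) β) :=
        D.comp_mono hf le_rfl
    _ = D.comp (D.gr f) (D.comp (D.conv (D.gr f)) (D.reidx f (𝟙 B) β)) :=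
        (D.comp_assoc _ _ _).symm
    _ ≤ D.comp (D.gr f) β := D.comp_mono le_rfl (D.convgr_comp_le f β)

lemma gr_comp_reidx {X Y Z : C} (f : X ⟶ Y) (g : Y ⟶ Z) :
    D.gr (f ≫ g) = D.reidx f (𝟙 Z) (D.gr g) := by
  have h := D.reidx_comp f g (𝟙 Z) (𝟙 Z) (D.d Z)
  rw [Category.comp_id] at h
  exact h

lemma gr_comp {X Y Z : C} (f : X ⟶ Y) (g : Y ⟶ Z) (hf : D.Total (D.gr f)) :
    D.gr (f ≫ g) = D.comp (D.gr f) (D.gr g) := by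
  rw [D.gr_comp_reidx f g, D.reidx_one_eq f hf]

lemma total_id (X : C) : D.Total (D.gr (𝟙 X)) := by
  unfold RelDoctrine.Total
  rw [D.gr_id, D.conv_d, D.d_comp]

lemma total_comp {X Y Z : C} (f : X ⟶ Y) (g : Y ⟶ Z)
    (hf : D.Total (D.gr f)) (hg : D.Total (D.gr g)) : D.Total (D.gr (f ≫ g)) := by
  unfold RelDoctrine.Total
  rw [D.gr_comp f g hf, D.conv_comp]
  calc D.d X ≤ D.comp (D.gr f) (D.conv (D.gr f)) := hf
    _ = D.comp (D.comp (D.gr f) (D.d Y)) (D.conv (D.gr f)) := by rw [D.comp_d]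
    _ ≤ D.comp (D.comp (D.gr f) (D.comp (D.gr g) (D.conv (D.gr g)))) (D.conv (D.gr f)) :=
        D.comp_mono (D.comp_mono le_rfl hg) le_rfl
    _ = D.comp (D.comp (D.gr f) (D.gr g)) (D.comp (D.conv (D.gr g)) (D.conv (D.gr f))) := by
        simp only [D.comp_assoc]

end RelDoctrine

namespace CartStruct

variable {C : Type u} [Category.{v} C] {P : C → C → Type w} [∀ X Y : C, PartialOrder (P X Y)]
variable [HasTerminal C] [HasBinaryProducts C] {D : RelDoctrine C P} (CS : CartStruct D)

lemma gr_map {X Y A B : C} (f : X ⟶ Y) (g : A ⟶ B) :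
    CS.rprod (D.gr f) (D.gr g) = D.gr (Limits.prod.map f g) := by
  have h := CS.rprod_natural f (𝟙 Y) g (𝟙 B) (D.d Y) (D.d B)
  rw [← CS.d_rprod, prod.map_id_id] at h
  exact h

lemma total_diag (CS : CartStruct D) (X : C) : D.Total (D.gr (diag X)) := by
  have h := CS.le_diag (D.d X)
  rw [← CS.d_rprod, D.comp_d] at h
  exact h

lemma total_fst (CS : CartStruct D) (X A : C) : D.Total (D.gr (Limits.prod.fst : X ⨯ A ⟶ X)) := by
  have h := CS.le_fst (D.d X) (D.d A)
  rw [← CS.d_rprod, D.comp_d] at h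
  exact h

lemma total_snd (CS : CartStruct D) (X A : C) : D.Total (D.gr (Limits.prod.snd : X ⨯ A ⟶ A)) := by
  have h := CS.le_snd (D.d X) (D.d A)
  rw [← CS.d_rprod, D.comp_d] at h
  exact h

lemma total_map (CS : CartStruct D) {X Y A B : C} (f : X ⟶ Y) (g : A ⟶ B)
    (hf : D.Total (D.gr f)) (hg : D.Total (D.gr g)) :
    D.Total (D.gr (Limits.prod.map f g)) := by
  unfold RelDoctrine.Total
  calc D.d (X ⨯ A) = CS.rprod (D.d X) (D.d A) := CS.d_rprod X A
    _ ≤ CS.rprod (D.comp (D.gr f) (D.conv (D.gr f))) (D.comp (D.gr g) (D.conv (D.gr g))) :=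
        CS.rprod_mono hf hg
    _ = D.comp (CS.rprod (D.gr f) (D.gr g)) (CS.rprod (D.conv (D.gr f)) (D.conv (D.gr g))) :=
        (CS.rprod_comp _ _ _ _).symm
    _ = D.comp (D.gr (Limits.prod.map f g)) (D.conv (D.gr (Limits.prod.map f g))) := by
        rw [← CS.rprod_conv, CS.gr_map]

lemma conv_meet {X Y : C} (α β : P X Y) :
    D.conv (CS.meet α β) = CS.meet (D.conv α) (D.conv β) := by
  simp only [CartStruct.meet, D.conv_comp, D.conv_conv, CS.rprod_conv, D.comp_assoc]

lemma frob_conv (hF : CS.Frobenius) {W Z B : C} (f : W ⟶ Z) (γ : P W B) (δ : P Z B) :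
    CS.meet (D.comp (D.conv (D.gr f)) γ) δ
      = D.comp (D.conv (D.gr f)) (CS.meet γ (D.comp (D.gr f) δ)) := by
  have h := congrArg D.conv (hF W Z B f (D.conv γ) (D.conv δ))
  simpa only [CS.conv_meet, D.conv_comp, D.conv_conv] using h

end CartStruct

end AuxLemmas

open CategoryTheory.Limits in
/-- In a cartesian relational doctrine satisfying Frobenius reciprocity:
`(d_X ⊠ gr Δ_X) ; (gr Δ_X ° ⊠ d_X) = gr Δ_X ° ; gr Δ_X` (modulo the associator). -/
theorem statement16 [HasTerminal C] [HasBinaryProducts C]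
    (D : RelDoctrine C P) (CS : CartStruct D) (hF : CS.Frobenius) (X : C) :
    D.comp (D.comp (CS.rprod (D.d X) (D.gr (diag X)))
        (D.gr (prod.associator X X X).inv))
      (CS.rprod (D.conv (D.gr (diag X))) (D.d X)) =
      D.comp (D.conv (D.gr (diag X))) (D.gr (diag X)) := by
  -- categorical identities
  have e1 : Limits.prod.map (𝟙 X) (diag X) ≫ (Limits.prod.associator X X X).inv
      = diag (X ⨯ X) ≫ Limits.prod.map (𝟙 (X ⨯ X)) (Limits.prod.snd : X ⨯ X ⟶ X) := by
    ext <;> simp [Limits.prod.associator, diag, prod.lift_fst, prod.lift_snd, prod.lift_fst_assoc, prod.lift_snd_assoc]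
  have e2 : Limits.prod.map (diag X) (𝟙 X)
      = diag (X ⨯ X) ≫
          Limits.prod.map ((Limits.prod.fst : X ⨯ X ⟶ X) ≫ diag X)
            (Limits.prod.snd : X ⨯ X ⟶ X) := by
    ext <;> simp [diag, prod.lift_fst, prod.lift_snd, prod.lift_fst_assoc, prod.lift_snd_assoc]
  have e3 : diag X ≫ (Limits.prod.snd : X ⨯ X ⟶ X) = 𝟙 X := by simp [diag, prod.lift_snd]
  have e4 : diag (X ⨯ X) ≫
      Limits.prod.map (Limits.prod.fst : X ⨯ X ⟶ X) (Limits.prod.snd : X ⨯ X ⟶ X)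
      = 𝟙 (X ⨯ X) := by ext <;> simp
  have s1 : CS.rprod (D.d X) (D.gr (diag X))
      = D.gr (Limits.prod.map (𝟙 X) (diag X)) := by
    rw [← CS.gr_map, D.gr_id]
  have s2 : CS.rprod (D.conv (D.gr (diag X))) (D.d X)
      = D.conv (D.gr (Limits.prod.map (diag X) (𝟙 X))) := by
    rw [← CS.gr_map, CS.rprod_conv, D.gr_id, D.conv_d]
  have g6 : D.comp (D.gr (diag X))
        (D.comp (D.gr (Limits.prod.snd : X ⨯ X ⟶ X))
          (D.conv (D.gr (Limits.prod.snd : X ⨯ X ⟶ X))))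
      = D.conv (D.gr (Limits.prod.snd : X ⨯ X ⟶ X)) := by
    rw [D.comp_assoc, ← D.gr_comp (diag X) _ (CS.total_diag X), e3, D.gr_id, D.d_comp]
  have g7 : CS.meet (D.conv (D.gr (Limits.prod.fst : X ⨯ X ⟶ X)))
        (D.conv (D.gr (Limits.prod.snd : X ⨯ X ⟶ X)))
      = D.gr (diag X) := by
    simp only [CartStruct.meet]
    rw [← CS.rprod_conv, CS.gr_map, ← D.comp_assoc, ← D.conv_comp,
      ← D.gr_comp _ _ (CS.total_diag (X ⨯ X)), e4, D.gr_id, D.conv_d, D.comp_d]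
  calc
    D.comp (D.comp (CS.rprod (D.d X) (D.gr (diag X)))
          (D.gr (Limits.prod.associator X X X).inv))
        (CS.rprod (D.conv (D.gr (diag X))) (D.d X))
      = D.comp (D.comp (D.gr (Limits.prod.map (𝟙 X) (diag X)))
            (D.gr (Limits.prod.associator X X X).inv))
          (D.conv (D.gr (Limits.prod.map (diag X) (𝟙 X)))) := by rw [s1, s2]
    _ = D.comp (D.gr (Limits.prod.map (𝟙 X) (diag X) ≫ (Limits.prod.associator X X X).inv))
          (D.conv (D.gr (Limits.prod.map (diag X) (𝟙 X)))) := by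
        rw [D.gr_comp _ _ (CS.total_map _ _ (D.total_id X) (CS.total_diag X))]
    _ = D.comp
          (D.gr (diag (X ⨯ X) ≫
            Limits.prod.map (𝟙 (X ⨯ X)) (Limits.prod.snd : X ⨯ X ⟶ X)))
          (D.conv (D.gr (diag (X ⨯ X) ≫
            Limits.prod.map ((Limits.prod.fst : X ⨯ X ⟶ X) ≫ diag X)
              (Limits.prod.snd : X ⨯ X ⟶ X)))) := by rw [e1, e2]
    _ = D.comp
          (D.comp (D.gr (diag (X ⨯ X)))
            (D.gr (Limits.prod.map (𝟙 (X ⨯ X)) (Limits.prod.snd : X ⨯ X ⟶ X))))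
          (D.comp
            (D.conv (D.gr (Limits.prod.map ((Limits.prod.fst : X ⨯ X ⟶ X) ≫ diag X)
              (Limits.prod.snd : X ⨯ X ⟶ X))))
            (D.conv (D.gr (diag (X ⨯ X))))) := by
        rw [D.gr_comp _ _ (CS.total_diag (X ⨯ X)), D.gr_comp _ _ (CS.total_diag (X ⨯ X)),
          D.conv_comp]
    _ = D.comp
          (D.comp (D.gr (diag (X ⨯ X)))
            (D.comp
              (D.gr (Limits.prod.map (𝟙 (X ⨯ X)) (Limits.prod.snd : X ⨯ X ⟶ X)))
              (D.conv (D.gr (Limits.prod.map ((Limits.prod.fst : X ⨯ X ⟶ X) ≫ diag X)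
                (Limits.prod.snd : X ⨯ X ⟶ X))))))
          (D.conv (D.gr (diag (X ⨯ X)))) := by simp only [D.comp_assoc]
    _ = D.comp
          (D.comp (D.gr (diag (X ⨯ X)))
            (CS.rprod (D.conv (D.gr ((Limits.prod.fst : X ⨯ X ⟶ X) ≫ diag X)))
              (D.comp (D.gr (Limits.prod.snd : X ⨯ X ⟶ X))
                (D.conv (D.gr (Limits.prod.snd : X ⨯ X ⟶ X))))))
          (D.conv (D.gr (diag (X ⨯ X)))) := by
        rw [← CS.gr_map (𝟙 (X ⨯ X)) (Limits.prod.snd : X ⨯ X ⟶ X),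
          ← CS.gr_map ((Limits.prod.fst : X ⨯ X ⟶ X) ≫ diag X)
            (Limits.prod.snd : X ⨯ X ⟶ X),
          D.gr_id, CS.rprod_conv, CS.rprod_comp, D.d_comp]
    _ = CS.meet (D.conv (D.gr ((Limits.prod.fst : X ⨯ X ⟶ X) ≫ diag X)))
          (D.comp (D.gr (Limits.prod.snd : X ⨯ X ⟶ X))
            (D.conv (D.gr (Limits.prod.snd : X ⨯ X ⟶ X)))) := rfl
    _ = CS.meet
          (D.comp (D.conv (D.gr (diag X)))
            (D.conv (D.gr (Limits.prod.fst : X ⨯ X ⟶ X))))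
          (D.comp (D.gr (Limits.prod.snd : X ⨯ X ⟶ X))
            (D.conv (D.gr (Limits.prod.snd : X ⨯ X ⟶ X)))) := by
        rw [D.gr_comp _ _ (CS.total_fst X X), D.conv_comp]
    _ = D.comp (D.conv (D.gr (diag X)))
          (CS.meet (D.conv (D.gr (Limits.prod.fst : X ⨯ X ⟶ X)))
            (D.comp (D.gr (diag X))
              (D.comp (D.gr (Limits.prod.snd : X ⨯ X ⟶ X))
                (D.conv (D.gr (Limits.prod.snd : X ⨯ X ⟶ X)))))) :=
        CS.frob_conv hF (diag X) _ _
    _ = D.comp (D.conv (D.gr (diag X)))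
          (CS.meet (D.conv (D.gr (Limits.prod.fst : X ⨯ X ⟶ X)))
            (D.conv (D.gr (Limits.prod.snd : X ⨯ X ⟶ X)))) := by rw [g6]
    _ = D.comp (D.conv (D.gr (diag X))) (D.gr (diag X)) := by rw [g7]
end

section
/- Let R be a cartesian and modular relational doctrine. Then for every relation α ∈ R(X,Y) the equation (α ⊠ d_Y) ; gr(Δ_Y)° ; gr(!_Y) = (d_X ⊠ α°) ; gr(Δ_X)° ; gr(!_X) holds in R(X×Y, 1). -/
open CategoryTheory

universe w w' v v' u u'

variable {C : Type u} [Category.{v} C] {P : C → C → Type w} [∀ X Y : C, PartialOrder (P X Y)]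

open CategoryTheory.Limits

section AuxLemmas

open CategoryTheory.Limits

variable [HasTerminal C] [HasBinaryProducts C] (D : RelDoctrine C P)

lemma aux_reidx_conv {A X B Y : C} (f : A ⟶ X) (g : B ⟶ Y) (α : P X Y) :
    D.conv (D.reidx f g α) = D.reidx g f (D.conv α) := by
  refine le_antisymm (D.conv_reidx_le f g α) ?_
  have h := D.conv_reidx_le g f (D.conv α)
  rw [D.conv_conv] at h
  have h2 := D.conv_mono h
  rwa [D.conv_conv] at h2

lemma aux_gr_id (X : C) : D.gr (𝟙 X) = D.d X := by
  unfold RelDoctrine.gr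
  rw [D.reidx_id]

lemma aux_conv_gr {X Y : C} (f : X ⟶ Y) :
    D.conv (D.gr f) = D.reidx (𝟙 Y) f (D.d Y) := by
  unfold RelDoctrine.gr
  rw [aux_reidx_conv, D.conv_d]

lemma aux_gr_comp_le {X Y Z : C} (f : X ⟶ Y) (g : Y ⟶ Z) :
    D.comp (D.gr f) (D.gr g) ≤ D.gr (f ≫ g) := by
  have h1 : D.gr f ≤ D.reidx (f ≫ g) g (D.d Z) := by
    have h := D.reidx_mono f (𝟙 Y) (D.d_le_reidx g)
    rw [← D.reidx_comp] at h
    simpa [RelDoctrine.gr] using h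
  calc D.comp (D.gr f) (D.gr g)
      ≤ D.comp (D.reidx (f ≫ g) g (D.d Z)) (D.reidx g (𝟙 Z) (D.d Z)) :=
        D.comp_mono h1 le_rfl
    _ ≤ D.reidx (f ≫ g) (𝟙 Z) (D.comp (D.d Z) (D.d Z)) := D.comp_reidx_le _ _ _ _ _
    _ = D.gr (f ≫ g) := by rw [D.d_comp]; rfl

lemma aux_conv_gr_le_of_section {X Y : C} (u : X ⟶ Y) (v : Y ⟶ X)
    (huv : u ≫ v = 𝟙 X) : D.conv (D.gr u) ≤ D.gr v := by
  rw [aux_conv_gr]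
  have h := D.reidx_mono (𝟙 Y) u (D.d_le_reidx v)
  rw [← D.reidx_comp] at h
  simpa [RelDoctrine.gr, huv] using h

lemma aux_rprod_gr (CS : CartStruct D) {X Y A B : C} (f : X ⟶ Y) (g : A ⟶ B) :
    CS.rprod (D.gr f) (D.gr g) = D.gr (prod.map f g) := by
  unfold RelDoctrine.gr
  rw [CS.rprod_natural, ← CS.d_rprod, prod.map_id_id]

lemma aux_comp_sandwich_le {X Y : C} {a : P X X} {b : P Y Y}
    (ha : a ≤ D.d X) (hb : b ≤ D.d Y) (α : P X Y) :
    D.comp (D.comp a α) b ≤ α := by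
  calc D.comp (D.comp a α) b
      ≤ D.comp (D.comp (D.d X) α) (D.d Y) := D.comp_mono (D.comp_mono ha le_rfl) hb
    _ = α := by rw [D.d_comp, D.comp_d]

lemma aux_comp_reassoc {A B X Y U V : C} (w : P A X) (x : P X B) (α : P B U)
    (y : P U Y) (z : P Y V) :
    D.comp (D.comp w (D.comp (D.comp x α) y)) z
      = D.comp (D.comp (D.comp w x) α) (D.comp y z) := by
  rw [D.comp_assoc w (D.comp x α) y, D.comp_assoc w x α,
    ← D.comp_assoc (D.comp (D.comp w x) α) y z]

lemma aux_meet_le_left (CS : CartStruct D) {X Y : C} (α β : P X Y) :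
    CS.meet α β ≤ α := by
  have h1 : CS.meet α β ≤
      D.comp (D.comp (D.gr (diag X))
        (D.comp (D.comp (D.gr (prod.fst : X ⨯ X ⟶ X)) α)
          (D.conv (D.gr (prod.fst : Y ⨯ Y ⟶ Y))))) (D.conv (D.gr (diag Y))) :=
    D.comp_mono (D.comp_mono le_rfl (CS.le_fst α β)) le_rfl
  rw [aux_comp_reassoc] at h1
  refine le_trans h1 (aux_comp_sandwich_le D ?_ ?_ α)
  · have h := aux_gr_comp_le D (diag X) (prod.fst : X ⨯ X ⟶ X)
    rwa [show diag X ≫ prod.fst = 𝟙 X from prod.lift_fst _ _, aux_gr_id] at h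
  · have h2 := aux_gr_comp_le D (diag Y) (prod.fst : Y ⨯ Y ⟶ Y)
    rw [show diag Y ≫ prod.fst = 𝟙 Y from prod.lift_fst _ _, aux_gr_id] at h2
    calc D.comp (D.conv (D.gr (prod.fst : Y ⨯ Y ⟶ Y))) (D.conv (D.gr (diag Y)))
        = D.conv (D.comp (D.gr (diag Y)) (D.gr (prod.fst : Y ⨯ Y ⟶ Y))) :=
          (D.conv_comp _ _).symm
      _ ≤ D.conv (D.d Y) := D.conv_mono h2
      _ = D.d Y := D.conv_d Y

lemma aux_meet_le_right (CS : CartStruct D) {X Y : C} (α β : P X Y) :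
    CS.meet α β ≤ β := by
  have h1 : CS.meet α β ≤
      D.comp (D.comp (D.gr (diag X))
        (D.comp (D.comp (D.gr (prod.snd : X ⨯ X ⟶ X)) β)
          (D.conv (D.gr (prod.snd : Y ⨯ Y ⟶ Y))))) (D.conv (D.gr (diag Y))) :=
    D.comp_mono (D.comp_mono le_rfl (CS.le_snd α β)) le_rfl
  rw [aux_comp_reassoc] at h1
  refine le_trans h1 (aux_comp_sandwich_le D ?_ ?_ β)
  · have h := aux_gr_comp_le D (diag X) (prod.snd : X ⨯ X ⟶ X)
    rwa [show diag X ≫ prod.snd = 𝟙 X from prod.lift_snd _ _, aux_gr_id] at h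
  · have h2 := aux_gr_comp_le D (diag Y) (prod.snd : Y ⨯ Y ⟶ Y)
    rw [show diag Y ≫ prod.snd = 𝟙 Y from prod.lift_snd _ _, aux_gr_id] at h2
    calc D.comp (D.conv (D.gr (prod.snd : Y ⨯ Y ⟶ Y))) (D.conv (D.gr (diag Y)))
        = D.conv (D.comp (D.gr (diag Y)) (D.gr (prod.snd : Y ⨯ Y ⟶ Y))) :=
          (D.conv_comp _ _).symm
      _ ≤ D.conv (D.d Y) := D.conv_mono h2
      _ = D.d Y := D.conv_d Y

lemma aux_le_meet (CS : CartStruct D) {X Y : C} {α β γ : P X Y}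
    (h1 : γ ≤ α) (h2 : γ ≤ β) : γ ≤ CS.meet α β :=
  le_trans (CS.le_diag γ)
    (D.comp_mono (D.comp_mono le_rfl (CS.rprod_mono h1 h2)) le_rfl)

lemma aux_meet_comm (CS : CartStruct D) {X Y : C} (α β : P X Y) :
    CS.meet α β = CS.meet β α :=
  le_antisymm
    (aux_le_meet D CS (aux_meet_le_right D CS α β) (aux_meet_le_left D CS α β))
    (aux_le_meet D CS (aux_meet_le_right D CS β α) (aux_meet_le_left D CS β α))

lemma aux_d_le_diag_pair (CS : CartStruct D) (W : C) :
    D.d W ≤ D.comp (D.gr (diag W)) (D.conv (D.gr (diag W))) := by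
  have h := CS.le_diag (D.d W)
  rwa [← CS.d_rprod, D.comp_d] at h

lemma aux_rprod_comp_conv_diag (CS : CartStruct D) {X A Z : C} (α : P X Z) (β : P A Z) :
    D.comp (CS.rprod α β) (D.conv (D.gr (diag Z))) =
      CS.meet (D.comp (D.gr (prod.fst : X ⨯ A ⟶ X)) α)
        (D.comp (D.gr (prod.snd : X ⨯ A ⟶ A)) β) := by
  have hsec : diag (X ⨯ A) ≫ prod.map prod.fst prod.snd = 𝟙 (X ⨯ A) := by
    apply Limits.prod.hom_ext <;> simp
  have he : D.comp (D.gr (diag (X ⨯ A)))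
      (D.gr (prod.map (prod.fst : X ⨯ A ⟶ X) (prod.snd : X ⨯ A ⟶ A))) = D.d (X ⨯ A) := by
    refine le_antisymm ?_ ?_
    · have h := aux_gr_comp_le D (diag (X ⨯ A)) (prod.map prod.fst prod.snd)
      rwa [hsec, aux_gr_id] at h
    · calc D.d (X ⨯ A)
          ≤ D.comp (D.gr (diag (X ⨯ A))) (D.conv (D.gr (diag (X ⨯ A)))) :=
            aux_d_le_diag_pair D CS _
        _ ≤ _ := D.comp_mono le_rfl (aux_conv_gr_le_of_section D _ _ hsec)
  have key : CS.rprod (D.comp (D.gr (prod.fst : X ⨯ A ⟶ X)) α)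
      (D.comp (D.gr (prod.snd : X ⨯ A ⟶ A)) β)
      = D.comp (D.gr (prod.map (prod.fst : X ⨯ A ⟶ X) (prod.snd : X ⨯ A ⟶ A)))
        (CS.rprod α β) := by
    rw [← CS.rprod_comp, aux_rprod_gr]
  show _ = D.comp (D.comp (D.gr (diag (X ⨯ A))) _) (D.conv (D.gr (diag Z)))
  rw [key, D.comp_assoc (D.gr (diag (X ⨯ A))) _ (CS.rprod α β), he, D.d_comp]

lemma aux_comp_gr_terminal_le (CS : CartStruct D) {X Y : C} (α : P X Y) :
    D.comp α (D.gr (terminal.from Y)) ≤ D.gr (terminal.from X) := by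
  have h := CS.le_term (D.comp α (D.gr (terminal.from Y)))
  rwa [show terminal.from (⊤_ C) = 𝟙 (⊤_ C) from terminal.hom_ext _ _,
    aux_gr_id, D.conv_d, D.comp_d] at h

end AuxLemmas

open CategoryTheory.Limits in
/-- In a cartesian and modular relational doctrine:
`(α ⊠ d_Y) ; gr Δ_Y ° ; gr !_Y = (d_X ⊠ α°) ; gr Δ_X ° ; gr !_X`. -/
theorem statement17 [HasTerminal C] [HasBinaryProducts C]
    (D : RelDoctrine C P) (CS : CartStruct D) (hM : CS.Modular)
    (X Y : C) (α : P X Y) :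
    D.comp (D.comp (CS.rprod α (D.d Y)) (D.conv (D.gr (diag Y))))
        (D.gr (terminal.from Y)) =
      D.comp (D.comp (CS.rprod (D.d X) (D.conv α)) (D.conv (D.gr (diag X))))
        (D.gr (terminal.from X)) := by
  have hL : D.comp (CS.rprod α (D.d Y)) (D.conv (D.gr (diag Y)))
      = CS.meet (D.comp (D.gr (prod.fst : X ⨯ Y ⟶ X)) α) (D.gr (prod.snd : X ⨯ Y ⟶ Y)) := by
    rw [aux_rprod_comp_conv_diag D CS α (D.d Y), D.comp_d]
  have hR : D.comp (CS.rprod (D.d X) (D.conv α)) (D.conv (D.gr (diag X)))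
      = CS.meet (D.gr (prod.fst : X ⨯ Y ⟶ X))
          (D.comp (D.gr (prod.snd : X ⨯ Y ⟶ Y)) (D.conv α)) := by
    rw [aux_rprod_comp_conv_diag D CS (D.d X) (D.conv α), D.comp_d]
  rw [hL, hR]
  refine le_antisymm ?_ ?_
  · have h := hM (X ⨯ Y) X Y (D.gr (prod.fst : X ⨯ Y ⟶ X)) (D.gr (prod.snd : X ⨯ Y ⟶ Y)) α
    calc D.comp (CS.meet (D.comp (D.gr (prod.fst : X ⨯ Y ⟶ X)) α)
            (D.gr (prod.snd : X ⨯ Y ⟶ Y))) (D.gr (terminal.from Y))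
        ≤ D.comp (D.comp (CS.meet (D.gr (prod.fst : X ⨯ Y ⟶ X))
            (D.comp (D.gr (prod.snd : X ⨯ Y ⟶ Y)) (D.conv α))) α) (D.gr (terminal.from Y)) :=
          D.comp_mono h le_rfl
      _ = D.comp (CS.meet (D.gr (prod.fst : X ⨯ Y ⟶ X))
            (D.comp (D.gr (prod.snd : X ⨯ Y ⟶ Y)) (D.conv α)))
            (D.comp α (D.gr (terminal.from Y))) := (D.comp_assoc _ _ _).symm
      _ ≤ _ := D.comp_mono le_rfl (aux_comp_gr_terminal_le D CS α)
  · have h := hM (X ⨯ Y) Y X (D.gr (prod.snd : X ⨯ Y ⟶ Y)) (D.gr (prod.fst : X ⨯ Y ⟶ X))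
      (D.conv α)
    rw [D.conv_conv] at h
    calc D.comp (CS.meet (D.gr (prod.fst : X ⨯ Y ⟶ X))
            (D.comp (D.gr (prod.snd : X ⨯ Y ⟶ Y)) (D.conv α))) (D.gr (terminal.from X))
        = D.comp (CS.meet (D.comp (D.gr (prod.snd : X ⨯ Y ⟶ Y)) (D.conv α))
            (D.gr (prod.fst : X ⨯ Y ⟶ X))) (D.gr (terminal.from X)) := by
          rw [aux_meet_comm]
      _ ≤ D.comp (D.comp (CS.meet (D.gr (prod.snd : X ⨯ Y ⟶ Y))
            (D.comp (D.gr (prod.fst : X ⨯ Y ⟶ X)) α)) (D.conv α)) (D.gr (terminal.from X)) :=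
          D.comp_mono h le_rfl
      _ = D.comp (CS.meet (D.gr (prod.snd : X ⨯ Y ⟶ Y))
            (D.comp (D.gr (prod.fst : X ⨯ Y ⟶ X)) α))
            (D.comp (D.conv α) (D.gr (terminal.from X))) := (D.comp_assoc _ _ _).symm
      _ ≤ D.comp (CS.meet (D.gr (prod.snd : X ⨯ Y ⟶ Y))
            (D.comp (D.gr (prod.fst : X ⨯ Y ⟶ X)) α)) (D.gr (terminal.from Y)) :=
          D.comp_mono le_rfl (aux_comp_gr_terminal_le D CS (D.conv α))
      _ = _ := by rw [aux_meet_comm]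
end
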